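/- Let 2 ≤ r, 2 ≤ c and max(r,c) ≤ v ≤ rc with 2v ≥ 2rc − c·min(r, c − 1). If there exists an (r × c, v)-near triple array, then for every integer i with 0 < i ≤ rc − v there exists an (r × c, v + i)-near triple array. -/

import Mathlib

open Finset

/-- An `r × c` row-column design on `v` symbols is binary if no symbol occurs
twice in any row or in any column. -/
def IsBinaryDesign {r c v : ℕ} (T : Fin r × Fin c → Fin v) : Prop :=
  (∀ (i : Fin r) (j j' : Fin c), j ≠ j' → T (i, j) ≠ T (i, j')) ∧
  (∀ (j : Fin c) (i i' : Fin r), i ≠ i' → T (i, j) ≠ T (i', j))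

/-- The replication number of a symbol `s`: the number of cells containing `s`. -/
def replNum {r c v : ℕ} (T : Fin r × Fin c → Fin v) (s : Fin v) : ℕ :=
  (Finset.univ.filter (fun p : Fin r × Fin c => T p = s)).card

/-- The average replication number `e = rc/v` as a rational number. -/
def avgRepl (r c v : ℕ) : ℚ := ((r : ℚ) * (c : ℚ)) / (v : ℚ)

/-- A design is equireplicate if `e = rc/v` is an integer and every symbol has
replication number `e`. -/
def IsEquireplicate {r c v : ℕ} (T : Fin r × Fin c → Fin v) : Prop :=
  (avgRepl r c v).den = 1 ∧ ∀ s : Fin v, (replNum T s : ℚ) = avgRepl r c v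

/-- A design is near equireplicate if `e = rc/v` is not an integer and every symbol
has replication number `⌊e⌋` or `⌈e⌉`. -/
def IsNearEquireplicate {r c v : ℕ} (T : Fin r × Fin c → Fin v) : Prop :=
  (avgRepl r c v).den ≠ 1 ∧
  ∀ s : Fin v, (replNum T s : ℤ) = ⌊avgRepl r c v⌋ ∨ (replNum T s : ℤ) = ⌈avgRepl r c v⌉

/-- The set of symbols occurring in row `i`. -/
def rowSet {r c v : ℕ} (T : Fin r × Fin c → Fin v) (i : Fin r) : Finset (Fin v) :=
  Finset.univ.image (fun j : Fin c => T (i, j))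

/-- The set of symbols occurring in column `j`. -/
def colSet {r c v : ℕ} (T : Fin r × Fin c → Fin v) (j : Fin c) : Finset (Fin v) :=
  Finset.univ.image (fun i : Fin r => T (i, j))

/-- Average row-column intersection size `λ_rc`. -/
def lamRC {r c v : ℕ} (T : Fin r × Fin c → Fin v) : ℚ :=
  (∑ i : Fin r, ∑ j : Fin c, ((rowSet T i ∩ colSet T j).card : ℚ)) / ((r : ℚ) * (c : ℚ))

/-- Average row-row intersection size `λ_rr`. -/
def lamRR {r c v : ℕ} (T : Fin r × Fin c → Fin v) : ℚ :=
  (∑ p ∈ Finset.univ.filter (fun p : Fin r × Fin r => p.1 < p.2),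
      ((rowSet T p.1 ∩ rowSet T p.2).card : ℚ)) / ((r : ℚ) * ((r : ℚ) - 1) / 2)

/-- Average column-column intersection size `λ_cc`. -/
def lamCC {r c v : ℕ} (T : Fin r × Fin c → Fin v) : ℚ :=
  (∑ p ∈ Finset.univ.filter (fun p : Fin c × Fin c => p.1 < p.2),
      ((colSet T p.1 ∩ colSet T p.2).card : ℚ)) / ((c : ℚ) * ((c : ℚ) - 1) / 2)

/-- An `(r × c, v)`-near triple array. -/
def IsNearTripleArray {r c v : ℕ} (T : Fin r × Fin c → Fin v) : Prop :=
  IsBinaryDesign T ∧ (IsEquireplicate T ∨ IsNearEquireplicate T) ∧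
  (∀ (i : Fin r) (j : Fin c),
    ((rowSet T i ∩ colSet T j).card : ℤ) = ⌊lamRC T⌋ ∨
    ((rowSet T i ∩ colSet T j).card : ℤ) = ⌈lamRC T⌉) ∧
  (∀ i j : Fin r, i ≠ j →
    ((rowSet T i ∩ rowSet T j).card : ℤ) = ⌊lamRR T⌋ ∨
    ((rowSet T i ∩ rowSet T j).card : ℤ) = ⌈lamRR T⌉) ∧
  (∀ i j : Fin c, i ≠ j →
    ((colSet T i ∩ colSet T j).card : ℤ) = ⌊lamCC T⌋ ∨
    ((colSet T i ∩ colSet T j).card : ℤ) = ⌈lamCC T⌉)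


lemma window_lemma {ι : Type*} (s : Finset ι) (hs : s.Nonempty) (f : ι → ℕ) (k : ℕ)
    (hf : ∀ x ∈ s, f x = k ∨ f x = k + 1) (μ : ℚ)
    (hμ : μ = (∑ x ∈ s, (f x : ℚ)) / (s.card : ℚ)) :
    (∀ x ∈ s, ((f x : ℤ) = ⌊μ⌋ ∨ (f x : ℤ) = ⌈μ⌉)) ∧ (μ.den = 1 → ∀ x ∈ s, (f x : ℚ) = μ) := by
  have hn : 0 < s.card := Finset.card_pos.mpr hs
  have hnQ : (0:ℚ) < (s.card : ℚ) := by exact_mod_cast hn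
  have hsum : (∑ x ∈ s, (f x : ℚ)) = ((∑ x ∈ s, f x : ℕ) : ℚ) := by push_cast; ring
  by_cases hall : ∀ x ∈ s, f x = k
  · have hS : (∑ x ∈ s, f x) = k * s.card := by
      rw [Finset.sum_congr rfl hall]; simp [mul_comm]
    have hμk : μ = (k : ℚ) := by
      rw [hμ, hsum, hS]; push_cast; field_simp
    constructor
    · intro x hx
      left
      rw [hμk, Int.floor_natCast, hall x hx]
    · intro _ x hx
      rw [hμk, hall x hx]
  · by_cases hall2 : ∀ x ∈ s, f x = k + 1
    · have hS : (∑ x ∈ s, f x) = (k+1) * s.card := by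
        rw [Finset.sum_congr rfl hall2]; simp [mul_comm]
      have hμk : μ = ((k:ℚ) + 1) := by
        rw [hμ, hsum, hS]; push_cast; field_simp
      constructor
      · intro x hx
        left
        rw [hμk, hall2 x hx]
        have h9 : ((k:ℚ) + 1) = ((k+1 : ℕ) : ℚ) := by push_cast; ring
        rw [h9, Int.floor_natCast]
      · intro _ x hx
        rw [hμk, hall2 x hx]; push_cast; ring
    · -- mixed case
      push_neg at hall hall2
      obtain ⟨x₁, hx₁, hfx₁⟩ := hall
      obtain ⟨x₂, hx₂, hfx₂⟩ := hall2
      have hfx₁' : f x₁ = k + 1 := by rcases hf x₁ hx₁ with h | h; exact absurd h hfx₁; exact h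
      have hfx₂' : f x₂ = k := by rcases hf x₂ hx₂ with h | h; exact h; exact absurd h hfx₂
      have hlb : k * s.card < ∑ x ∈ s, f x := by
        have : ∑ _x ∈ s, k < ∑ x ∈ s, f x := by
          apply Finset.sum_lt_sum
          · intro x hx; rcases hf x hx with h | h <;> omega
          · exact ⟨x₁, hx₁, by omega⟩
        simpa [mul_comm] using this
      have hub : ∑ x ∈ s, f x < (k+1) * s.card := by
        have : ∑ x ∈ s, f x < ∑ _x ∈ s, (k+1) := by
          apply Finset.sum_lt_sum
          · intro x hx; rcases hf x hx with h | h <;> omega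
          · exact ⟨x₂, hx₂, by omega⟩
        simpa [mul_comm] using this
      have hμl : (k:ℚ) < μ := by
        rw [hμ, hsum, lt_div_iff₀ hnQ]
        exact_mod_cast hlb
      have hμu : μ < (k:ℚ) + 1 := by
        rw [hμ, hsum, div_lt_iff₀ hnQ]
        push_cast
        exact_mod_cast hub
      have hfl : ⌊μ⌋ = (k:ℤ) := by
        rw [Int.floor_eq_iff (R := ℚ) (z := (k:ℤ))]
        constructor
        · push_cast; linarith
        · push_cast; linarith
      have hcl : ⌈μ⌉ = (k:ℤ) + 1 := by
        have h1 : ⌈μ⌉ ≤ ⌊μ⌋ + 1 := Int.ceil_le_floor_add_one μ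
        have h2 : (k:ℤ) < ⌈μ⌉ := by
          by_contra hcon
          push_neg at hcon
          have : (⌈μ⌉ : ℚ) ≤ (k:ℚ) := by exact_mod_cast hcon
          linarith [Int.le_ceil μ]
        omega
      constructor
      · intro x hx
        rcases hf x hx with h | h
        · left; rw [hfl, h]
        · right; rw [hcl, h]; push_cast; ring
      · intro hden
        exfalso
        have : (μ.num : ℚ) = μ := (Rat.den_eq_one_iff μ).mp hden
        have h1 : (k:ℚ) < (μ.num:ℚ) := by rw [this]; exact hμl
        have h2 : (μ.num:ℚ) < (k:ℚ) + 1 := by rw [this]; exact hμu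
        have h1' : (k:ℤ) < μ.num := by exact_mod_cast h1
        have h2' : μ.num < (k:ℤ) + 1 := by exact_mod_cast h2
        omega
/-- number of ordered pairs p.1 < p.2 in Fin n × Fin n -/
lemma card_ltPairs (n : ℕ) :
    ((univ : Finset (Fin n × Fin n)).filter (fun p => p.1 < p.2)).card * 2 = n * n - n := by
  classical
  have hswap : ((univ : Finset (Fin n × Fin n)).filter (fun p => p.1 < p.2)).card
      = ((univ : Finset (Fin n × Fin n)).filter (fun p => p.2 < p.1)).card := by
    apply Finset.card_bij (fun p _ => (p.2, p.1))
    · intro p hp; simp only [mem_filter, mem_univ, true_and] at hp ⊢; exact hp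
    · intro p hp q hq h
      simp only [Prod.mk.injEq] at h
      exact Prod.ext h.2 h.1
    · intro p hp
      exact ⟨(p.2, p.1), by simp only [mem_filter, mem_univ, true_and] at hp ⊢; exact hp, rfl⟩
  have hunion : ((univ : Finset (Fin n × Fin n)).filter (fun p => p.1 < p.2))
      ∪ ((univ : Finset (Fin n × Fin n)).filter (fun p => p.2 < p.1))
      = (univ : Finset (Fin n × Fin n)).filter (fun p => p.1 ≠ p.2) := by
    ext p
    simp only [mem_union, mem_filter, mem_univ, true_and]
    constructor
    · rintro (h | h)
      · exact ne_of_lt h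
      · exact (ne_of_lt h).symm
    · intro h
      rcases lt_or_gt_of_ne h with h' | h'
      · left; exact h'
      · right; exact h'
  have hdisj : Disjoint ((univ : Finset (Fin n × Fin n)).filter (fun p => p.1 < p.2))
      ((univ : Finset (Fin n × Fin n)).filter (fun p => p.2 < p.1)) := by
    rw [Finset.disjoint_left]
    intro p hp hq
    simp only [mem_filter, mem_univ, true_and] at hp hq
    exact absurd hq (lt_asymm hp)
  have hcard : ((univ : Finset (Fin n × Fin n)).filter (fun p => p.1 ≠ p.2)).card = n * n - n := by
    have : (univ : Finset (Fin n × Fin n)).filter (fun p => p.1 ≠ p.2) = (univ : Finset (Fin n)).offDiag := by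
      ext p
      simp [Finset.mem_offDiag]
    rw [this, Finset.offDiag_card]
    simp [Finset.card_univ]
  rw [← hcard, ← hunion, Finset.card_union_of_disjoint hdisj, ← hswap]
  ring
lemma sum_replNum {r c v : ℕ} (T : Fin r × Fin c → Fin v) :
    ∑ s : Fin v, replNum T s = r * c := by
  have h := Finset.card_eq_sum_card_fiberwise
    (f := T) (s := (univ : Finset (Fin r × Fin c))) (t := univ) (fun x _ => mem_univ _)
  have hc : (univ : Finset (Fin r × Fin c)).card = r * c := by
    simp [Finset.card_univ]
  rw [hc] at h
  simpa [replNum] using h.symm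

section BinHelp
variable {r c v : ℕ} (T : Fin r × Fin c → Fin v)

lemma mem_rowSet_iff (s : Fin v) (i : Fin r) : s ∈ rowSet T i ↔ ∃ j, T (i, j) = s := by
  simp [rowSet]

lemma mem_colSet_iff (s : Fin v) (j : Fin c) : s ∈ colSet T j ↔ ∃ i, T (i, j) = s := by
  simp [colSet]

lemma self_mem_rowSet (p : Fin r × Fin c) : T p ∈ rowSet T p.1 := by
  rw [mem_rowSet_iff]; exact ⟨p.2, rfl⟩

lemma self_mem_colSet (p : Fin r × Fin c) : T p ∈ colSet T p.2 := by
  rw [mem_colSet_iff]; exact ⟨p.1, rfl⟩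

lemma rowcount_eq_repl (hb : IsBinaryDesign T) (s : Fin v) :
    (univ.filter (fun i => s ∈ rowSet T i)).card = replNum T s := by
  classical
  have himg : ((univ.filter (fun p : Fin r × Fin c => T p = s)).image Prod.fst)
      = univ.filter (fun i => s ∈ rowSet T i) := by
    ext i
    simp only [mem_image, mem_filter, mem_univ, true_and, mem_rowSet_iff]
    constructor
    · rintro ⟨p, hp, rfl⟩
      exact ⟨p.2, by rw [show (p.1, p.2) = p from rfl]; exact hp⟩
    · rintro ⟨j, hj⟩; exact ⟨(i, j), hj, rfl⟩
  have hinj : Set.InjOn Prod.fst (↑(univ.filter (fun p : Fin r × Fin c => T p = s)) : Set (Fin r × Fin c)) := by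
    rintro ⟨p1, p2⟩ hp ⟨q1, q2⟩ hq h
    simp only [coe_filter, Set.mem_setOf_eq] at hp hq
    simp only at h
    subst h
    by_cases h2 : p2 = q2
    · subst h2; rfl
    · exact absurd (hp.2.trans hq.2.symm) (hb.1 p1 p2 q2 h2)
  rw [replNum, ← himg, Finset.card_image_of_injOn hinj]

end BinHelp

section BinHelp2
variable {r c v : ℕ} (T : Fin r × Fin c → Fin v)

lemma colcount_eq_repl (hb : IsBinaryDesign T) (s : Fin v) :
    (univ.filter (fun j => s ∈ colSet T j)).card = replNum T s := by
  classical
  have himg : ((univ.filter (fun p : Fin r × Fin c => T p = s)).image Prod.snd)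
      = univ.filter (fun j => s ∈ colSet T j) := by
    ext j
    simp only [mem_image, mem_filter, mem_univ, true_and, mem_colSet_iff]
    constructor
    · rintro ⟨p, hp, rfl⟩
      exact ⟨p.1, by rw [show (p.1, p.2) = p from rfl]; exact hp⟩
    · rintro ⟨i, hi⟩; exact ⟨(i, j), hi, rfl⟩
  have hinj : Set.InjOn Prod.snd (↑(univ.filter (fun p : Fin r × Fin c => T p = s)) : Set (Fin r × Fin c)) := by
    rintro ⟨p1, p2⟩ hp ⟨q1, q2⟩ hq h
    simp only [coe_filter, Set.mem_setOf_eq] at hp hq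
    simp only at h
    subst h
    by_cases h2 : p1 = q1
    · subst h2; rfl
    · exact absurd (hp.2.trans hq.2.symm) (hb.2 p2 p1 q1 h2)
  rw [replNum, ← himg, Finset.card_image_of_injOn hinj]

lemma inter_card_as_sum {i : Fin r} {j : Fin c} :
    (rowSet T i ∩ colSet T j).card
      = ∑ s : Fin v, (if s ∈ rowSet T i then 1 else 0) * (if s ∈ colSet T j then 1 else 0) := by
  have h1 : rowSet T i ∩ colSet T j = univ.filter (fun s => s ∈ rowSet T i ∧ s ∈ colSet T j) := by
    ext x; simp [mem_inter]
  rw [h1, Finset.card_filter]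
  apply Finset.sum_congr rfl
  intro s _
  by_cases h1 : s ∈ rowSet T i <;> by_cases h2 : s ∈ colSet T j <;> simp [h1, h2]

lemma sum_RC_le (hb : IsBinaryDesign T) (hrepl : ∀ s, replNum T s ≤ 2) :
    ∑ i : Fin r, ∑ j : Fin c, (rowSet T i ∩ colSet T j).card ≤ 2 * (r * c) := by
  classical
  have step1 : ∑ i : Fin r, ∑ j : Fin c, (rowSet T i ∩ colSet T j).card
      = ∑ s : Fin v, (replNum T s) * (replNum T s) := by
    calc ∑ i : Fin r, ∑ j : Fin c, (rowSet T i ∩ colSet T j).card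
        = ∑ i : Fin r, ∑ j : Fin c, ∑ s : Fin v,
            (if s ∈ rowSet T i then 1 else 0) * (if s ∈ colSet T j then 1 else 0) := by
          exact Finset.sum_congr rfl fun i _ => Finset.sum_congr rfl fun j _ => inter_card_as_sum T
      _ = ∑ s : Fin v, ∑ i : Fin r, ∑ j : Fin c,
            (if s ∈ rowSet T i then 1 else 0) * (if s ∈ colSet T j then 1 else 0) := by
          rw [show (∑ i : Fin r, ∑ j : Fin c, ∑ s : Fin v,
            (if s ∈ rowSet T i then 1 else 0) * (if s ∈ colSet T j then 1 else 0))
            = ∑ i : Fin r, ∑ s : Fin v, ∑ j : Fin c,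
            (if s ∈ rowSet T i then 1 else 0) * (if s ∈ colSet T j then 1 else 0) from
            Finset.sum_congr rfl fun i _ => Finset.sum_comm]
          exact Finset.sum_comm
      _ = ∑ s : Fin v, (∑ i : Fin r, if s ∈ rowSet T i then 1 else 0)
            * (∑ j : Fin c, if s ∈ colSet T j then 1 else 0) := by
          exact Finset.sum_congr rfl fun s _ => (Finset.sum_mul_sum univ univ _ _).symm
      _ = ∑ s : Fin v, (replNum T s) * (replNum T s) := by
          refine Finset.sum_congr rfl fun s _ => ?_
          rw [← Finset.card_filter, ← Finset.card_filter, rowcount_eq_repl T hb,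
            colcount_eq_repl T hb]
  rw [step1]
  calc ∑ s : Fin v, (replNum T s) * (replNum T s)
      ≤ ∑ s : Fin v, 2 * replNum T s :=
        Finset.sum_le_sum fun s _ => Nat.mul_le_mul_right _ (hrepl s)
    _ = 2 * (r * c) := by rw [← Finset.mul_sum, sum_replNum T]

lemma sum_CC_le (hb : IsBinaryDesign T) (hrepl : ∀ s, replNum T s = 1 ∨ replNum T s = 2) :
    ∑ p ∈ (univ.filter (fun p : Fin c × Fin c => p.1 < p.2)),
      (colSet T p.1 ∩ colSet T p.2).card ≤ r * c - v := by
  classical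
  have hcard : ∀ p : Fin c × Fin c, (colSet T p.1 ∩ colSet T p.2).card
      = ∑ s : Fin v, (if s ∈ colSet T p.1 ∧ s ∈ colSet T p.2 then 1 else 0) := by
    intro p
    have h1 : colSet T p.1 ∩ colSet T p.2
        = univ.filter (fun s => s ∈ colSet T p.1 ∧ s ∈ colSet T p.2) := by
      ext x; simp [mem_inter]
    rw [h1, Finset.card_filter]
  have step1 : ∑ p ∈ (univ.filter (fun p : Fin c × Fin c => p.1 < p.2)),
      (colSet T p.1 ∩ colSet T p.2).card
      = ∑ s : Fin v, ((univ.filter (fun p : Fin c × Fin c => p.1 < p.2)).filter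
          (fun p => s ∈ colSet T p.1 ∧ s ∈ colSet T p.2)).card := by
    rw [Finset.sum_congr rfl fun p _ => hcard p, Finset.sum_comm]
    exact Finset.sum_congr rfl fun s _ => (Finset.card_filter _ _).symm
  rw [step1]
  have hpt : ∀ s : Fin v, ((univ.filter (fun p : Fin c × Fin c => p.1 < p.2)).filter
      (fun p => s ∈ colSet T p.1 ∧ s ∈ colSet T p.2)).card ≤ replNum T s - 1 := by
    intro s
    set D := univ.filter (fun j => s ∈ colSet T j) with hD
    have hDcard : D.card = replNum T s := colcount_eq_repl T hb s
    have hmem : ∀ p : Fin c × Fin c, p ∈ ((univ.filter (fun p : Fin c × Fin c => p.1 < p.2)).filter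
        (fun p => s ∈ colSet T p.1 ∧ s ∈ colSet T p.2)) → p.1 < p.2 ∧ p.1 ∈ D ∧ p.2 ∈ D := by
      intro p hp
      simp only [mem_filter, mem_univ, true_and, hD] at hp ⊢
      exact ⟨hp.1, hp.2.1, hp.2.2⟩
    rcases hrepl s with h1 | h2
    · -- replication 1 : no such pair
      have : ((univ.filter (fun p : Fin c × Fin c => p.1 < p.2)).filter
          (fun p => s ∈ colSet T p.1 ∧ s ∈ colSet T p.2)) = ∅ := by
        rw [Finset.eq_empty_iff_forall_notMem]
        intro p hp
        obtain ⟨hlt, h1', h2'⟩ := hmem p hp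
        have hsub : {p.1, p.2} ⊆ D := by
          intro x hx
          rcases Finset.mem_insert.mp hx with rfl | hx
          · exact h1'
          · rw [Finset.mem_singleton.mp hx]; exact h2'
        have : ({p.1, p.2} : Finset (Fin c)).card = 2 := Finset.card_pair (ne_of_lt hlt)
        have := Finset.card_le_card hsub
        omega
      rw [this]
      simp
    · -- replication 2 : at most one pair
      have hcle : ((univ.filter (fun p : Fin c × Fin c => p.1 < p.2)).filter
          (fun p => s ∈ colSet T p.1 ∧ s ∈ colSet T p.2)).card ≤ 1 := by
        rw [Finset.card_le_one]
        intro p hp q hq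
        obtain ⟨hltp, hp1, hp2⟩ := hmem p hp
        obtain ⟨hltq, hq1, hq2⟩ := hmem q hq
        have hsubp : {p.1, p.2} ⊆ D := by
          intro x hx
          rcases Finset.mem_insert.mp hx with rfl | hx
          · exact hp1
          · rw [Finset.mem_singleton.mp hx]; exact hp2
        have hcp : ({p.1, p.2} : Finset (Fin c)).card = 2 := Finset.card_pair (ne_of_lt hltp)
        have hDp : D = {p.1, p.2} :=
          (Finset.eq_of_subset_of_card_le hsubp (by omega)).symm
        have hq1' : q.1 ∈ ({p.1, p.2} : Finset (Fin c)) := hDp ▸ hq1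
        have hq2' : q.2 ∈ ({p.1, p.2} : Finset (Fin c)) := hDp ▸ hq2
        simp only [Finset.mem_insert, Finset.mem_singleton] at hq1' hq2'
        have : q.1 = p.1 ∧ q.2 = p.2 := by
          rcases hq1' with h | h <;> rcases hq2' with h' | h'
          · exact absurd (h ▸ h' ▸ hltq) (lt_irrefl _)
          · exact ⟨h, h'⟩
          · rw [h, h'] at hltq; exact absurd hltp (lt_asymm hltq)
          · exact absurd (h ▸ h' ▸ hltq) (lt_irrefl _)
        exact (Prod.ext this.1 this.2).symm
      omega
  calc ∑ s : Fin v, ((univ.filter (fun p : Fin c × Fin c => p.1 < p.2)).filter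
          (fun p => s ∈ colSet T p.1 ∧ s ∈ colSet T p.2)).card
      ≤ ∑ s : Fin v, (replNum T s - 1) := Finset.sum_le_sum fun s _ => hpt s
    _ = r * c - v := by
        have h1 : ∑ s : Fin v, ((replNum T s - 1) + 1) = r * c := by
          have heq : ∀ s ∈ (univ : Finset (Fin v)), (replNum T s - 1) + 1 = replNum T s := by
            intro s _; rcases hrepl s with h | h <;> omega
          rw [Finset.sum_congr rfl heq, sum_replNum T]
        rw [Finset.sum_add_distrib] at h1
        simp only [Finset.sum_const, Finset.card_univ, Fintype.card_fin, smul_eq_mul, mul_one] at h1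
        omega

end BinHelp2

lemma card_ltPairs_q (n : ℕ) :
    ((((univ : Finset (Fin n × Fin n)).filter (fun p => p.1 < p.2)).card : ℚ))
      = (n : ℚ) * ((n : ℚ) - 1) / 2 := by
  have h := card_ltPairs n
  have hle : n ≤ n * n := by nlinarith
  have hq : ((((univ : Finset (Fin n × Fin n)).filter (fun p => p.1 < p.2)).card : ℚ)) * 2
      = (n : ℚ) * (n : ℚ) - (n : ℚ) := by
    rw [show ((n : ℚ) * (n : ℚ) - (n : ℚ)) = ((n * n - n : ℕ) : ℚ) by
      rw [Nat.cast_sub hle]; push_cast; ring]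
    exact_mod_cast congrArg (Nat.cast : ℕ → ℚ) h
  linarith

lemma pair_inter_insert {α : Type*} [DecidableEq α] (w : α) (X Y : Finset α) :
    (insert w X) ∩ (insert w Y) = insert w (X ∩ Y) := by
  ext x; simp only [mem_inter, mem_insert]; tauto

lemma erase_inter_erase {α : Type*} [DecidableEq α] (a : α) (s t : Finset α) :
    (s.erase a) ∩ (t.erase a) = (s ∩ t).erase a := by
  ext x; simp only [mem_inter, mem_erase]; tauto



/-- Master window lemma: if all values of `f` on `s` lie in `{k, k+1}`, then each value
equals the floor or ceiling of the mean, and if the mean is an integer all values equal it. -/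
lemma nta_step {r c v' : ℕ} (hr : 2 ≤ r) (hc : 2 ≤ c) (hrc2 : r * c ≤ 2 * v')
    (hvlt : v' < r * c) (hccb : 2 * (r * c - v') ≤ c * (c - 1))
    (T : Fin r × Fin c → Fin v') (hT : IsNearTripleArray T) :
    ∃ T' : Fin r × Fin c → Fin (v' + 1), IsNearTripleArray T' := by
  classical
  obtain ⟨hbin, hrep, hRC, hRR, hCC⟩ := hT
  have hv0 : 0 < v' := by nlinarith
  have hrcpos : 0 < r * c := by positivity
  have hv0q : (0:ℚ) < (v' : ℚ) := by exact_mod_cast hv0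
  -- average replication between 1 and 2
  have he1 : (1:ℚ) ≤ avgRepl r c v' := by
    rw [avgRepl, le_div_iff₀ hv0q]
    have : (v' : ℚ) ≤ ((r * c : ℕ) : ℚ) := by exact_mod_cast le_of_lt hvlt
    push_cast at this ⊢
    linarith
  have he2 : avgRepl r c v' ≤ 2 := by
    rw [avgRepl, div_le_iff₀ hv0q]
    have : ((r * c : ℕ) : ℚ) ≤ 2 * (v' : ℚ) := by exact_mod_cast hrc2
    push_cast at this ⊢
    linarith
  have hrepl12 : ∀ s, replNum T s = 1 ∨ replNum T s = 2 := by
    intro s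
    rcases hrep with ⟨hden, hval⟩ | ⟨hden, hval⟩
    · have h := hval s
      have h1 : (1:ℚ) ≤ (replNum T s : ℚ) := h ▸ he1
      have h2 : (replNum T s : ℚ) ≤ 2 := h ▸ he2
      have h1' : 1 ≤ replNum T s := by exact_mod_cast h1
      have h2' : replNum T s ≤ 2 := by exact_mod_cast h2
      omega
    · have hfl : (1:ℤ) ≤ ⌊avgRepl r c v'⌋ := by
        rw [Int.le_floor]; exact_mod_cast he1
      have hfu : ⌊avgRepl r c v'⌋ ≤ 2 := by
        have := Int.floor_le (avgRepl r c v')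
        have h2 : (⌊avgRepl r c v'⌋ : ℚ) ≤ 2 := le_trans this he2
        exact_mod_cast h2
      have hcl : (1:ℤ) ≤ ⌈avgRepl r c v'⌉ := by
        have := Int.le_ceil (avgRepl r c v')
        have h1 : (1:ℚ) ≤ (⌈avgRepl r c v'⌉ : ℚ) := le_trans he1 this
        exact_mod_cast h1
      have hcu : ⌈avgRepl r c v'⌉ ≤ 2 := by
        rw [Int.ceil_le]; exact_mod_cast he2
      rcases hval s with h | h
      · have h1 : (1:ℤ) ≤ (replNum T s : ℤ) := h ▸ hfl
        have h2 : (replNum T s : ℤ) ≤ 2 := h ▸ hfu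
        have h1' : 1 ≤ replNum T s := by exact_mod_cast h1
        have h2' : replNum T s ≤ 2 := by exact_mod_cast h2
        omega
      · have h1 : (1:ℤ) ≤ (replNum T s : ℤ) := h ▸ hcl
        have h2 : (replNum T s : ℤ) ≤ 2 := h ▸ hcu
        have h1' : 1 ≤ replNum T s := by exact_mod_cast h1
        have h2' : replNum T s ≤ 2 := by exact_mod_cast h2
        omega
  have hrepl_le2 : ∀ s, replNum T s ≤ 2 := fun s => by rcases hrepl12 s with h | h <;> omega
  -- old row-column intersection values are 1 or 2
  have hlamrc2 : lamRC T ≤ 2 := by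
    rw [lamRC, div_le_iff₀ (by positivity : (0:ℚ) < (r:ℚ) * (c:ℚ))]
    have hsum := sum_RC_le T hbin hrepl_le2
    have : (∑ i : Fin r, ∑ j : Fin c, ((rowSet T i ∩ colSet T j).card : ℚ))
        = ((∑ i : Fin r, ∑ j : Fin c, (rowSet T i ∩ colSet T j).card : ℕ) : ℚ) := by
      push_cast; ring
    rw [this]
    have h2 : ((∑ i : Fin r, ∑ j : Fin c, (rowSet T i ∩ colSet T j).card : ℕ) : ℚ)
        ≤ ((2 * (r * c) : ℕ) : ℚ) := by exact_mod_cast hsum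
    push_cast at h2 ⊢
    linarith
  have hRCval : ∀ (i : Fin r) (j : Fin c),
      (rowSet T i ∩ colSet T j).card = 1 ∨ (rowSet T i ∩ colSet T j).card = 2 := by
    intro i j
    have hge : 1 ≤ (rowSet T i ∩ colSet T j).card := by
      rw [Nat.one_le_iff_ne_zero, ← Nat.pos_iff_ne_zero, Finset.card_pos]
      exact ⟨T (i, j), Finset.mem_inter.mpr ⟨self_mem_rowSet T (i, j), self_mem_colSet T (i, j)⟩⟩
    have hle : (rowSet T i ∩ colSet T j).card ≤ 2 := by
      have hcu : ⌈lamRC T⌉ ≤ 2 := by rw [Int.ceil_le]; exact_mod_cast hlamrc2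
      have hfu : ⌊lamRC T⌋ ≤ 2 := le_trans (Int.floor_le_ceil _) hcu
      rcases hRC i j with h | h
      · have : ((rowSet T i ∩ colSet T j).card : ℤ) ≤ 2 := h ▸ hfu
        exact_mod_cast this
      · have : ((rowSet T i ∩ colSet T j).card : ℤ) ≤ 2 := h ▸ hcu
        exact_mod_cast this
    omega
  -- old column-column intersection values are 0 or 1
  have hlamcc1 : lamCC T ≤ 1 := by
    have hden : (0:ℚ) < (c:ℚ) * ((c:ℚ) - 1) / 2 := by
      have : (2:ℚ) ≤ (c:ℚ) := by exact_mod_cast hc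
      nlinarith
    rw [lamCC, div_le_iff₀ hden]
    have hsum := sum_CC_le T hbin hrepl12
    have hcast : (∑ p ∈ (univ.filter (fun p : Fin c × Fin c => p.1 < p.2)),
        ((colSet T p.1 ∩ colSet T p.2).card : ℚ))
        = ((∑ p ∈ (univ.filter (fun p : Fin c × Fin c => p.1 < p.2)),
            (colSet T p.1 ∩ colSet T p.2).card : ℕ) : ℚ) := by
      push_cast; ring
    rw [hcast]
    have h1 : ((∑ p ∈ (univ.filter (fun p : Fin c × Fin c => p.1 < p.2)),
        (colSet T p.1 ∩ colSet T p.2).card : ℕ) : ℚ) ≤ ((r * c - v' : ℕ) : ℚ) := by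
      exact_mod_cast hsum
    have h2 : ((r * c - v' : ℕ) : ℚ) ≤ (c:ℚ) * ((c:ℚ) - 1) / 2 := by
      have hcc1 : ((2 * (r * c - v') : ℕ) : ℚ) ≤ ((c * (c - 1) : ℕ) : ℚ) := by exact_mod_cast hccb
      have h3 : ((c * (c - 1) : ℕ) : ℚ) = (c:ℚ) * ((c:ℚ) - 1) := by
        rw [Nat.cast_mul, Nat.cast_sub (by omega : 1 ≤ c)]; push_cast; ring
      rw [h3] at hcc1
      push_cast at hcc1
      linarith
    linarith
  have hCCval : ∀ (i j : Fin c), i ≠ j →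
      (colSet T i ∩ colSet T j).card = 0 ∨ (colSet T i ∩ colSet T j).card = 1 := by
    intro i j hne
    have hcu : ⌈lamCC T⌉ ≤ 1 := by rw [Int.ceil_le]; exact_mod_cast hlamcc1
    have hfu : ⌊lamCC T⌋ ≤ 1 := le_trans (Int.floor_le_ceil _) hcu
    have hle : (colSet T i ∩ colSet T j).card ≤ 1 := by
      rcases hCC i j hne with h | h
      · have : ((colSet T i ∩ colSet T j).card : ℤ) ≤ 1 := h ▸ hfu
        exact_mod_cast this
      · have : ((colSet T i ∩ colSet T j).card : ℤ) ≤ 1 := h ▸ hcu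
        exact_mod_cast this
    omega
  -- old row-row window
  have hlamrr0 : (0:ℚ) ≤ lamRR T := by
    rw [lamRR]
    apply div_nonneg
    · apply Finset.sum_nonneg; intro p _; positivity
    · have : (2:ℚ) ≤ (r:ℚ) := by exact_mod_cast hr
      nlinarith
  obtain ⟨A, hRRwin⟩ : ∃ A : ℕ, ∀ (i j : Fin r), i ≠ j →
      (rowSet T i ∩ rowSet T j).card = A ∨ (rowSet T i ∩ rowSet T j).card = A + 1 := by
    refine ⟨⌊lamRR T⌋.toNat, fun i j hne => ?_⟩
    have hA : (⌊lamRR T⌋.toNat : ℤ) = ⌊lamRR T⌋ := Int.toNat_of_nonneg (Int.floor_nonneg.mpr hlamrr0)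
    have hcf : ⌈lamRR T⌉ ≤ ⌊lamRR T⌋ + 1 := Int.ceil_le_floor_add_one _
    have hfc : ⌊lamRR T⌋ ≤ ⌈lamRR T⌉ := Int.floor_le_ceil _
    rcases hRR i j hne with h | h
    · left; have : ((rowSet T i ∩ rowSet T j).card : ℤ) = (⌊lamRR T⌋.toNat : ℤ) := by rw [h, hA]
      exact_mod_cast this
    · have h1 : ((rowSet T i ∩ rowSet T j).card : ℤ) ≤ (⌊lamRR T⌋.toNat : ℤ) + 1 := by
        rw [h, hA]; omega
      have h2 : ((⌊lamRR T⌋.toNat : ℤ)) ≤ ((rowSet T i ∩ rowSet T j).card : ℤ) := by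
        rw [h, hA]; omega
      have h1' : (rowSet T i ∩ rowSet T j).card ≤ ⌊lamRR T⌋.toNat + 1 := by exact_mod_cast h1
      have h2' : ⌊lamRR T⌋.toNat ≤ (rowSet T i ∩ rowSet T j).card := by exact_mod_cast h2
      omega
  -- a symbol with replication 2 exists
  have hdbl : ∃ s, replNum T s = 2 := by
    by_contra hno
    push_neg at hno
    have hall1 : ∀ s ∈ (univ : Finset (Fin v')), replNum T s = 1 := by
      intro s _
      rcases hrepl12 s with h | h
      · exact h
      · exact absurd h (hno s)
    have hsum := sum_replNum T
    rw [Finset.sum_congr rfl hall1] at hsum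
    simp [Finset.card_univ] at hsum
    omega
  -- some (ordered) pair of rows shares a symbol
  have hpair1 : ∃ p ∈ (univ.filter (fun p : Fin r × Fin r => p.1 < p.2)),
      1 ≤ (rowSet T p.1 ∩ rowSet T p.2).card := by
    obtain ⟨s₀, hs₀⟩ := hdbl
    have h2 : 1 < (univ.filter (fun p : Fin r × Fin c => T p = s₀)).card := by
      rw [replNum] at hs₀; omega
    obtain ⟨q₁, hq₁, q₂, hq₂, hq12⟩ := Finset.one_lt_card.mp h2
    simp only [mem_filter, mem_univ, true_and] at hq₁ hq₂
    have hrne : q₁.1 ≠ q₂.1 := by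
      intro h
      have h2' : q₁.2 ≠ q₂.2 := fun h2 => hq12 (Prod.ext h h2)
      exact hbin.1 q₁.1 q₁.2 q₂.2 h2' (by
        have e1 : T (q₁.1, q₁.2) = s₀ := hq₁
        have e2 : T (q₁.1, q₂.2) = s₀ := by rw [h]; exact hq₂
        rw [e1, e2])
    have hm1 : s₀ ∈ rowSet T q₁.1 := by
      rw [mem_rowSet_iff]; exact ⟨q₁.2, hq₁⟩
    have hm2 : s₀ ∈ rowSet T q₂.1 := by
      rw [mem_rowSet_iff]; exact ⟨q₂.2, hq₂⟩
    rcases lt_or_gt_of_ne hrne with h | h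
    · refine ⟨(q₁.1, q₂.1), by simp [h], ?_⟩
      rw [Nat.one_le_iff_ne_zero, ← Nat.pos_iff_ne_zero, Finset.card_pos]
      exact ⟨s₀, Finset.mem_inter.mpr ⟨hm1, hm2⟩⟩
    · refine ⟨(q₂.1, q₁.1), by simp [h], ?_⟩
      rw [Nat.one_le_iff_ne_zero, ← Nat.pos_iff_ne_zero, Finset.card_pos]
      exact ⟨s₀, Finset.mem_inter.mpr ⟨hm2, hm1⟩⟩
  obtain ⟨p₁, hp₁mem, hp₁ge⟩ := hpair1
  obtain ⟨p₀, hp₀mem, hp₀max⟩ := Finset.exists_max_image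
    (univ.filter (fun p : Fin r × Fin r => p.1 < p.2))
    (fun p => (rowSet T p.1 ∩ rowSet T p.2).card) ⟨p₁, hp₁mem⟩
  obtain ⟨a, a'⟩ := p₀
  simp only [mem_filter, mem_univ, true_and] at hp₀mem
  have haa' : a < a' := hp₀mem
  have hane : a ≠ a' := ne_of_lt haa'
  have hMpos : 1 ≤ (rowSet T a ∩ rowSet T a').card :=
    le_trans hp₁ge (hp₀max p₁ hp₁mem)
  obtain ⟨sstar, hss⟩ := Finset.card_pos.mp (show 0 < (rowSet T a ∩ rowSet T a').card by omega)
  have hssr : sstar ∈ rowSet T a := (Finset.mem_inter.mp hss).1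
  have hssr' : sstar ∈ rowSet T a' := (Finset.mem_inter.mp hss).2
  obtain ⟨b, hTb⟩ := (mem_rowSet_iff T sstar a).mp hssr
  obtain ⟨b', hTb'⟩ := (mem_rowSet_iff T sstar a').mp hssr'
  have hPne : ((a, b) : Fin r × Fin c) ≠ (a', b') := by
    intro h
    exact hane (congrArg Prod.fst h)
  have hrepl_s : replNum T sstar = 2 := by
    have hsub : ({(a, b), (a', b')} : Finset (Fin r × Fin c))
        ⊆ univ.filter (fun p => T p = sstar) := by
      intro p hp
      rcases Finset.mem_insert.mp hp with rfl | hp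
      · simp [hTb]
      · rw [Finset.mem_singleton.mp hp]; simp [hTb']
    have hc2 : ({(a, b), (a', b')} : Finset (Fin r × Fin c)).card = 2 :=
      Finset.card_pair hPne
    have := Finset.card_le_card hsub
    rw [hc2] at this
    have := hrepl_le2 sstar
    rw [replNum] at *
    omega
  have hfiber : univ.filter (fun p : Fin r × Fin c => T p = sstar)
      = ({(a, b), (a', b')} : Finset (Fin r × Fin c)) := by
    refine (Finset.eq_of_subset_of_card_le ?_ ?_).symm
    · intro p hp
      rcases Finset.mem_insert.mp hp with rfl | hp
      · simp [hTb]
      · rw [Finset.mem_singleton.mp hp]; simp [hTb']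
    · rw [Finset.card_pair hPne]
      rw [replNum] at hrepl_s
      omega
  have hocc : ∀ p : Fin r × Fin c, T p = sstar ↔ (p = (a, b) ∨ p = (a', b')) := by
    intro p
    constructor
    · intro h
      have : p ∈ univ.filter (fun p : Fin r × Fin c => T p = sstar) := by simp [h]
      rw [hfiber] at this
      simpa using this
    · rintro (rfl | rfl)
      · exact hTb
      · exact hTb'
  have hbb' : b ≠ b' := by
    intro h
    subst h
    exact hbin.2 b a a' hane (hTb.trans hTb'.symm)
  have hrowmem : ∀ i : Fin r, sstar ∈ rowSet T i ↔ (i = a ∨ i = a') := by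
    intro i
    rw [mem_rowSet_iff]
    constructor
    · rintro ⟨j, hj⟩
      rcases (hocc (i, j)).mp hj with h | h
      · left; exact congrArg Prod.fst h
      · right; exact congrArg Prod.fst h
    · rintro (rfl | rfl)
      · exact ⟨b, hTb⟩
      · exact ⟨b', hTb'⟩
  have hcolmem : ∀ j : Fin c, sstar ∈ colSet T j ↔ (j = b ∨ j = b') := by
    intro j
    rw [mem_colSet_iff]
    constructor
    · rintro ⟨i, hi⟩
      rcases (hocc (i, j)).mp hi with h | h
      · left; exact congrArg Prod.snd h
      · right; exact congrArg Prod.snd h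
    · rintro (rfl | rfl)
      · exact ⟨a, hTb⟩
      · exact ⟨a', hTb'⟩
  have hmax : ∀ i j : Fin r, i ≠ j →
      (rowSet T i ∩ rowSet T j).card ≤ (rowSet T a ∩ rowSet T a').card := by
    intro i j hne
    rcases lt_or_gt_of_ne hne with h | h
    · exact hp₀max (i, j) (by simp [h])
    · rw [Finset.inter_comm]
      exact hp₀max (j, i) (by simp [h])
  -- values at the two corner positions
  have hcorner : ∀ (i : Fin r) (j : Fin c), sstar ∈ rowSet T i → sstar ∈ colSet T j →
      T (i, j) ≠ sstar → (rowSet T i ∩ colSet T j).card = 2 := by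
    intro i j h1 h2 h3
    have hsub : ({sstar, T (i, j)} : Finset (Fin v'))
        ⊆ rowSet T i ∩ colSet T j := by
      intro x hx
      rcases Finset.mem_insert.mp hx with rfl | hx
      · exact Finset.mem_inter.mpr ⟨h1, h2⟩
      · rw [Finset.mem_singleton.mp hx]
        exact Finset.mem_inter.mpr ⟨self_mem_rowSet T (i, j), self_mem_colSet T (i, j)⟩
    have hc2 : ({sstar, T (i, j)} : Finset (Fin v')).card = 2 :=
      Finset.card_pair (Ne.symm h3)
    have hle := Finset.card_le_card hsub
    rw [hc2] at hle
    rcases hRCval i j with h | h <;> omega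
  have hab'2 : (rowSet T a ∩ colSet T b').card = 2 := by
    apply hcorner
    · exact (hrowmem a).mpr (Or.inl rfl)
    · exact (hcolmem b').mpr (Or.inr rfl)
    · intro h
      rcases (hocc (a, b')).mp h with h' | h'
      · exact hbb' (congrArg Prod.snd h').symm
      · exact hane (congrArg Prod.fst h')
  have ha'b2 : (rowSet T a' ∩ colSet T b).card = 2 := by
    apply hcorner
    · exact (hrowmem a').mpr (Or.inr rfl)
    · exact (hcolmem b).mpr (Or.inl rfl)
    · intro h
      rcases (hocc (a', b)).mp h with h' | h'
      · exact hane (congrArg Prod.fst h').symm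
      · exact hbb' (congrArg Prod.snd h')
  have hCCbb'1 : (colSet T b ∩ colSet T b').card = 1 := by
    have hge : 1 ≤ (colSet T b ∩ colSet T b').card := by
      rw [Nat.one_le_iff_ne_zero, ← Nat.pos_iff_ne_zero, Finset.card_pos]
      exact ⟨sstar, Finset.mem_inter.mpr
        ⟨(hcolmem b).mpr (Or.inl rfl), (hcolmem b').mpr (Or.inr rfl)⟩⟩
    rcases hCCval b b' hbb' with h | h <;> omega
  -- the new design
  set T2 : Fin r × Fin c → Fin (v' + 1) :=
    fun p => if p = (a', b') then Fin.last v' else (T p).castSucc with hT2def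
  have hcsinj : Function.Injective (Fin.castSucc : Fin v' → Fin (v' + 1)) :=
    Fin.castSucc_injective v'
  have hwne : ∀ u : Fin v', Fin.castSucc u ≠ Fin.last v' :=
    fun u => ne_of_lt (Fin.castSucc_lt_last u)
  have hT2eq : T2 (a', b') = Fin.last v' := by simp [hT2def]
  have hT2ne : ∀ p, p ≠ (a', b') → T2 p = (T p).castSucc := by
    intro p h; simp [hT2def, h]
  have hwnotimg : ∀ S : Finset (Fin v'), Fin.last v' ∉ S.image Fin.castSucc := by
    intro S h
    obtain ⟨u, _, hu⟩ := Finset.mem_image.mp h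
    exact hwne u hu
  have hbin2 : IsBinaryDesign T2 := by
    constructor
    · intro i j j' hne heq
      by_cases h1 : (i, j) = ((a', b') : Fin r × Fin c)
      · have h2 : (i, j') ≠ ((a', b') : Fin r × Fin c) := by
          intro h
          exact hne ((congrArg Prod.snd h1).trans (congrArg Prod.snd h).symm)
        rw [show T2 (i, j) = Fin.last v' from by rw [h1]; exact hT2eq, hT2ne _ h2] at heq
        exact hwne _ heq.symm
      · by_cases h2 : (i, j') = ((a', b') : Fin r × Fin c)
        · rw [hT2ne _ h1, show T2 (i, j') = Fin.last v' from by rw [h2]; exact hT2eq] at heq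
          exact hwne _ heq
        · rw [hT2ne _ h1, hT2ne _ h2] at heq
          exact hbin.1 i j j' hne (hcsinj heq)
    · intro j i i' hne heq
      by_cases h1 : (i, j) = ((a', b') : Fin r × Fin c)
      · have h2 : (i', j) ≠ ((a', b') : Fin r × Fin c) := by
          intro h
          exact hne ((congrArg Prod.fst h1).trans (congrArg Prod.fst h).symm)
        rw [show T2 (i, j) = Fin.last v' from by rw [h1]; exact hT2eq, hT2ne _ h2] at heq
        exact hwne _ heq.symm
      · by_cases h2 : (i', j) = ((a', b') : Fin r × Fin c)
        · rw [hT2ne _ h1, show T2 (i', j) = Fin.last v' from by rw [h2]; exact hT2eq] at heq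
          exact hwne _ heq
        · rw [hT2ne _ h1, hT2ne _ h2] at heq
          exact hbin.2 j i i' hne (hcsinj heq)
  -- row and column symbol sets of the new design
  have hrow_ne : ∀ i : Fin r, i ≠ a' → rowSet T2 i = (rowSet T i).image Fin.castSucc := by
    intro i hi
    rw [rowSet, rowSet, Finset.image_image]
    apply Finset.image_congr
    intro j _
    exact hT2ne (i, j) (fun h => hi (congrArg Prod.fst h))
  have hcol_ne : ∀ j : Fin c, j ≠ b' → colSet T2 j = (colSet T j).image Fin.castSucc := by
    intro j hj
    rw [colSet, colSet, Finset.image_image]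
    apply Finset.image_congr
    intro i _
    exact hT2ne (i, j) (fun h => hj (congrArg Prod.snd h))
  have hrow_a' : rowSet T2 a'
      = insert (Fin.last v') (((rowSet T a').erase sstar).image Fin.castSucc) := by
    ext x
    simp only [rowSet, Finset.mem_image, Finset.mem_insert, Finset.mem_erase,
      Finset.mem_univ, true_and]
    constructor
    · rintro ⟨j, hj⟩
      by_cases hjb : j = b'
      · subst hjb
        left
        rw [← hj]
        exact hT2eq
      · right
        have hne2 : (a', j) ≠ ((a', b') : Fin r × Fin c) := fun h => hjb (congrArg Prod.snd h)
        refine ⟨T (a', j), ⟨?_, j, rfl⟩, ?_⟩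
        · intro h
          rcases (hocc (a', j)).mp h with h' | h'
          · exact hane (congrArg Prod.fst h').symm
          · exact hjb (congrArg Prod.snd h')
        · rw [← hj, hT2ne _ hne2]
    · rintro (rfl | ⟨u, ⟨hu1, j, hj⟩, rfl⟩)
      · exact ⟨b', hT2eq⟩
      · refine ⟨j, ?_⟩
        have hne2 : (a', j) ≠ ((a', b') : Fin r × Fin c) := by
          intro h
          apply hu1
          rw [← hj]
          rw [show j = b' from congrArg Prod.snd h]
          exact hTb'
        rw [hT2ne _ hne2, hj]
  have hcol_b' : colSet T2 b'
      = insert (Fin.last v') (((colSet T b').erase sstar).image Fin.castSucc) := by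
    ext x
    simp only [colSet, Finset.mem_image, Finset.mem_insert, Finset.mem_erase,
      Finset.mem_univ, true_and]
    constructor
    · rintro ⟨i, hi⟩
      by_cases hia : i = a'
      · subst hia
        left
        rw [← hi]
        exact hT2eq
      · right
        have hne2 : (i, b') ≠ ((a', b') : Fin r × Fin c) := fun h => hia (congrArg Prod.fst h)
        refine ⟨T (i, b'), ⟨?_, i, rfl⟩, ?_⟩
        · intro h
          rcases (hocc (i, b')).mp h with h' | h'
          · exact hbb' (congrArg Prod.snd h').symm
          · exact hia (congrArg Prod.fst h')
        · rw [← hi, hT2ne _ hne2]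
    · rintro (rfl | ⟨u, ⟨hu1, i, hi⟩, rfl⟩)
      · exact ⟨a', hT2eq⟩
      · refine ⟨i, ?_⟩
        have hne2 : (i, b') ≠ ((a', b') : Fin r × Fin c) := by
          intro h
          apply hu1
          rw [← hi]
          rw [show i = a' from congrArg Prod.fst h]
          exact hTb'
        rw [hT2ne _ hne2, hi]
  -- replication numbers of the new design
  have hrepl2 : ∀ s : Fin (v' + 1), replNum T2 s = 1 ∨ replNum T2 s = 2 := by
    intro s
    refine Fin.lastCases ?_ ?_ s
    · left
      have hfib : univ.filter (fun p : Fin r × Fin c => T2 p = Fin.last v') = {(a', b')} := by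
        ext p
        simp only [mem_filter, mem_univ, true_and, mem_singleton]
        constructor
        · intro h
          by_contra hne
          rw [hT2ne p hne] at h
          exact hwne _ h
        · rintro rfl
          exact hT2eq
      rw [replNum, hfib, Finset.card_singleton]
    · intro u
      have hfib : univ.filter (fun p : Fin r × Fin c => T2 p = u.castSucc)
          = (univ.filter (fun p : Fin r × Fin c => T p = u)).erase (a', b') := by
        ext p
        simp only [mem_filter, mem_univ, true_and, mem_erase]
        constructor
        · intro h
          have hne2 : p ≠ ((a', b') : Fin r × Fin c) := by
            rintro rfl
            rw [hT2eq] at h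
            exact hwne u h.symm
          rw [hT2ne p hne2] at h
          exact ⟨hne2, hcsinj h⟩
        · rintro ⟨hne2, h⟩
          rw [hT2ne p hne2, h]
      by_cases hu : u = sstar
      · subst hu
        left
        rw [replNum] at hrepl_s
        rw [replNum, hfib, Finset.card_erase_of_mem (by simp [hTb'])]
        omega
      · have hnotmem : (a', b') ∉ univ.filter (fun p : Fin r × Fin c => T p = u) := by
          simp only [mem_filter, mem_univ, true_and]
          intro h
          exact hu ((hTb'.symm.trans h).symm)
        rw [replNum, hfib, Finset.erase_eq_of_notMem hnotmem]
        exact hrepl12 u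
  -- intersection cardinalities of the new design: row-column
  have himg : ∀ X Y : Finset (Fin v'),
      (X.image Fin.castSucc ∩ Y.image Fin.castSucc).card = (X ∩ Y).card := by
    intro X Y
    rw [← Finset.image_inter _ _ hcsinj, Finset.card_image_of_injective _ hcsinj]
  have hsnotj : ∀ j : Fin c, j ≠ b → j ≠ b' → sstar ∉ colSet T j := by
    intro j h1 h2 hmem
    rcases (hcolmem j).mp hmem with h | h
    · exact h1 h
    · exact h2 h
  have hsnoti : ∀ i : Fin r, i ≠ a → i ≠ a' → sstar ∉ rowSet T i := by
    intro i h1 h2 hmem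
    rcases (hrowmem i).mp hmem with h | h
    · exact h1 h
    · exact h2 h
  have hRC2val : ∀ (i : Fin r) (j : Fin c),
      (rowSet T2 i ∩ colSet T2 j).card = 1 ∨ (rowSet T2 i ∩ colSet T2 j).card = 2 := by
    intro i j
    by_cases hia : i = a'
    · rw [hia]
      by_cases hjb : j = b'
      · rw [hjb]
        rw [hrow_a', hcol_b', pair_inter_insert, Finset.card_insert_of_notMem (by
          intro hmem
          exact hwnotimg _ (Finset.mem_inter.mp hmem).1)]
        rw [← Finset.image_inter _ _ hcsinj, Finset.card_image_of_injective _ hcsinj,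
          erase_inter_erase, Finset.card_erase_of_mem (Finset.mem_inter.mpr
            ⟨hssr', (hcolmem b').mpr (Or.inr rfl)⟩)]
        rcases hRCval a' b' with h | h <;> rw [h] <;> norm_num
      · rw [hrow_a', hcol_ne j hjb, Finset.insert_inter_of_notMem (hwnotimg _),
          ← Finset.image_inter _ _ hcsinj, Finset.card_image_of_injective _ hcsinj,
          Finset.erase_inter]
        by_cases hjb2 : j = b
        · rw [hjb2]
          rw [Finset.card_erase_of_mem (Finset.mem_inter.mpr
            ⟨hssr', (hcolmem b).mpr (Or.inl rfl)⟩)]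
          rw [ha'b2]
          left; rfl
        · rw [Finset.erase_eq_of_notMem (fun hmem =>
            hsnotj j hjb2 hjb (Finset.mem_inter.mp hmem).2)]
          exact hRCval a' j
    · by_cases hjb : j = b'
      · rw [hjb]
        rw [hrow_ne i hia, hcol_b', Finset.inter_comm,
          Finset.insert_inter_of_notMem (hwnotimg _),
          ← Finset.image_inter _ _ hcsinj, Finset.card_image_of_injective _ hcsinj,
          Finset.erase_inter]
        by_cases hia2 : i = a
        · rw [hia2]
          rw [Finset.card_erase_of_mem (Finset.mem_inter.mpr
            ⟨(hcolmem b').mpr (Or.inr rfl), hssr⟩)]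
          rw [Finset.inter_comm, hab'2]
          left; rfl
        · rw [Finset.erase_eq_of_notMem (fun hmem =>
            hsnoti i hia2 hia (Finset.mem_inter.mp hmem).2), Finset.inter_comm]
          exact hRCval i b'
      · rw [hrow_ne i hia, hcol_ne j hjb, himg]
        exact hRCval i j
  -- intersection cardinalities of the new design: row-row
  have hRR2val : ∀ i j : Fin r, i ≠ j →
      ((rowSet T2 i ∩ rowSet T2 j).card = (rowSet T a ∩ rowSet T a').card - 1 ∨
       (rowSet T2 i ∩ rowSet T2 j).card = ((rowSet T a ∩ rowSet T a').card - 1) + 1) := by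
    have hMwin := hRRwin a a' hane
    intro i j hne
    by_cases hia : i = a'
    · have hja' : j ≠ a' := fun h => hne (hia.trans h.symm)
      rw [hia]
      rw [hrow_a', hrow_ne j hja', Finset.insert_inter_of_notMem (hwnotimg _),
        ← Finset.image_inter _ _ hcsinj, Finset.card_image_of_injective _ hcsinj,
        Finset.erase_inter]
      by_cases hja : j = a
      · rw [hja]
        rw [Finset.card_erase_of_mem (Finset.mem_inter.mpr ⟨hssr', hssr⟩)]
        rw [Finset.inter_comm]
        left; rfl
      · rw [Finset.erase_eq_of_notMem (fun hmem =>
          hsnoti j hja hja' (Finset.mem_inter.mp hmem).2)]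
        have h1 := hRRwin a' j (Ne.symm hja')
        have h2 := hmax a' j (Ne.symm hja')
        omega
    · by_cases hja : j = a'
      · have hia' : i ≠ a' := hia
        rw [hja]
        rw [hrow_ne i hia, hrow_a', Finset.inter_comm,
          Finset.insert_inter_of_notMem (hwnotimg _),
          ← Finset.image_inter _ _ hcsinj, Finset.card_image_of_injective _ hcsinj,
          Finset.erase_inter]
        by_cases hia2 : i = a
        · rw [Finset.card_erase_of_mem (by
            rw [hia2]
            exact Finset.mem_inter.mpr ⟨hssr', hssr⟩)]
          rw [hia2, Finset.inter_comm]
          left; rfl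
        · rw [Finset.erase_eq_of_notMem (fun hmem =>
            hsnoti i hia2 hia (Finset.mem_inter.mp hmem).2)]
          have h1 := hRRwin a' i (Ne.symm hia')
          have h2 := hmax a' i (Ne.symm hia')
          omega
      · rw [hrow_ne i hia, hrow_ne j hja, himg]
        have h1 := hRRwin i j hne
        have h2 := hmax i j hne
        omega
  -- intersection cardinalities of the new design: column-column
  have hCC2val : ∀ i j : Fin c, i ≠ j →
      ((colSet T2 i ∩ colSet T2 j).card = 0 ∨ (colSet T2 i ∩ colSet T2 j).card = 1) := by
    intro i j hne
    by_cases hib : i = b'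
    · have hjb' : j ≠ b' := fun h => hne (hib.trans h.symm)
      rw [hib]
      rw [hcol_b', hcol_ne j hjb', Finset.insert_inter_of_notMem (hwnotimg _),
        ← Finset.image_inter _ _ hcsinj, Finset.card_image_of_injective _ hcsinj,
        Finset.erase_inter]
      by_cases hjb : j = b
      · rw [Finset.card_erase_of_mem (by
          rw [hjb]
          exact Finset.mem_inter.mpr
            ⟨(hcolmem b').mpr (Or.inr rfl), (hcolmem b).mpr (Or.inl rfl)⟩)]
        rw [hjb, Finset.inter_comm, hCCbb'1]
        left; rfl
      · rw [Finset.erase_eq_of_notMem (fun hmem =>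
          hsnotj j hjb hjb' (Finset.mem_inter.mp hmem).2)]
        exact hCCval b' j (Ne.symm hjb')
    · by_cases hjb : j = b'
      · rw [hjb]
        rw [hcol_ne i hib, hcol_b', Finset.inter_comm,
          Finset.insert_inter_of_notMem (hwnotimg _),
          ← Finset.image_inter _ _ hcsinj, Finset.card_image_of_injective _ hcsinj,
          Finset.erase_inter]
        by_cases hib2 : i = b
        · rw [Finset.card_erase_of_mem (by
            rw [hib2]
            exact Finset.mem_inter.mpr
              ⟨(hcolmem b').mpr (Or.inr rfl), (hcolmem b).mpr (Or.inl rfl)⟩)]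
          rw [hib2, Finset.inter_comm, hCCbb'1]
          left; rfl
        · rw [Finset.erase_eq_of_notMem (fun hmem =>
            hsnotj i hib2 hib (Finset.mem_inter.mp hmem).2), Finset.inter_comm]
          exact hCCval i b' hib
      · rw [hcol_ne i hib, hcol_ne j hjb, himg]
        exact hCCval i j hne
  -- assemble the near triple array conditions via the window lemma
  -- (a) replication
  have hne1 : (univ : Finset (Fin (v' + 1))).Nonempty :=
    ⟨⟨0, Nat.succ_pos v'⟩, mem_univ _⟩
  have hμrep : avgRepl r c (v' + 1)
      = (∑ s : Fin (v' + 1), ((replNum T2 s : ℕ) : ℚ)) / ((univ : Finset (Fin (v' + 1))).card : ℚ) := by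
    have h1 : (∑ s : Fin (v' + 1), ((replNum T2 s : ℕ) : ℚ)) = ((r * c : ℕ) : ℚ) := by
      rw [show (∑ s : Fin (v' + 1), ((replNum T2 s : ℕ) : ℚ))
        = ((∑ s : Fin (v' + 1), replNum T2 s : ℕ) : ℚ) by push_cast; ring, sum_replNum T2]
    rw [avgRepl, h1, Finset.card_univ, Fintype.card_fin]
    push_cast
    ring
  obtain ⟨hfc_rep, hden_rep⟩ := window_lemma univ hne1 (fun s => replNum T2 s) 1
    (fun s _ => hrepl2 s) (avgRepl r c (v' + 1)) hμrep
  have hequi : IsEquireplicate T2 ∨ IsNearEquireplicate T2 := by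
    by_cases hd : (avgRepl r c (v' + 1)).den = 1
    · exact Or.inl ⟨hd, fun s => hden_rep hd s (mem_univ s)⟩
    · exact Or.inr ⟨hd, fun s => hfc_rep s (mem_univ s)⟩
  -- (b) row-column condition
  have hnep : (univ : Finset (Fin r × Fin c)).Nonempty :=
    ⟨(⟨0, by omega⟩, ⟨0, by omega⟩), mem_univ _⟩
  have hμrc : lamRC T2
      = (∑ p ∈ (univ : Finset (Fin r × Fin c)), (((rowSet T2 p.1 ∩ colSet T2 p.2).card : ℕ) : ℚ))
        / ((univ : Finset (Fin r × Fin c)).card : ℚ) := by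
    rw [lamRC]
    congr 1
    · exact (Fintype.sum_prod_type
        (f := fun p : Fin r × Fin c => (((rowSet T2 p.1 ∩ colSet T2 p.2).card : ℕ) : ℚ))).symm
    · rw [Finset.card_univ, Fintype.card_prod, Fintype.card_fin, Fintype.card_fin]
      push_cast
      ring
  obtain ⟨hfc_rc, _⟩ := window_lemma univ hnep
    (fun p : Fin r × Fin c => (rowSet T2 p.1 ∩ colSet T2 p.2).card) 1
    (fun p _ => hRC2val p.1 p.2) (lamRC T2) hμrc
  have hrccond : ∀ (i : Fin r) (j : Fin c),
      ((rowSet T2 i ∩ colSet T2 j).card : ℤ) = ⌊lamRC T2⌋ ∨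
      ((rowSet T2 i ∩ colSet T2 j).card : ℤ) = ⌈lamRC T2⌉ :=
    fun i j => hfc_rc (i, j) (mem_univ _)
  -- (c) row-row condition
  have hnltr : ((univ : Finset (Fin r × Fin r)).filter (fun p => p.1 < p.2)).Nonempty :=
    ⟨p₁, hp₁mem⟩
  have hμrr : lamRR T2
      = (∑ p ∈ (univ : Finset (Fin r × Fin r)).filter (fun p => p.1 < p.2),
          (((rowSet T2 p.1 ∩ rowSet T2 p.2).card : ℕ) : ℚ))
        / ((((univ : Finset (Fin r × Fin r)).filter (fun p => p.1 < p.2)).card : ℕ) : ℚ) := by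
    rw [lamRR, ← card_ltPairs_q r]
  obtain ⟨hfc_rr, _⟩ := window_lemma _ hnltr
    (fun p : Fin r × Fin r => (rowSet T2 p.1 ∩ rowSet T2 p.2).card)
    ((rowSet T a ∩ rowSet T a').card - 1)
    (fun p hp => hRR2val p.1 p.2 (ne_of_lt (Finset.mem_filter.mp hp).2)) (lamRR T2) hμrr
  have hrrcond : ∀ i j : Fin r, i ≠ j →
      ((rowSet T2 i ∩ rowSet T2 j).card : ℤ) = ⌊lamRR T2⌋ ∨
      ((rowSet T2 i ∩ rowSet T2 j).card : ℤ) = ⌈lamRR T2⌉ := by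
    intro i j hneij
    rcases lt_or_gt_of_ne hneij with h | h
    · exact hfc_rr (i, j) (by simp [h])
    · rw [show rowSet T2 i ∩ rowSet T2 j = rowSet T2 j ∩ rowSet T2 i from Finset.inter_comm _ _]
      exact hfc_rr (j, i) (by simp [h])
  -- (d) column-column condition
  have hnltc : ((univ : Finset (Fin c × Fin c)).filter (fun p => p.1 < p.2)).Nonempty := by
    refine ⟨(⟨0, by omega⟩, ⟨1, by omega⟩), ?_⟩
    simp only [mem_filter, mem_univ, true_and]
    exact Fin.mk_lt_mk.mpr (by norm_num)
  have hμcc : lamCC T2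
      = (∑ p ∈ (univ : Finset (Fin c × Fin c)).filter (fun p => p.1 < p.2),
          (((colSet T2 p.1 ∩ colSet T2 p.2).card : ℕ) : ℚ))
        / ((((univ : Finset (Fin c × Fin c)).filter (fun p => p.1 < p.2)).card : ℕ) : ℚ) := by
    rw [lamCC, ← card_ltPairs_q c]
  obtain ⟨hfc_cc, _⟩ := window_lemma _ hnltc
    (fun p : Fin c × Fin c => (colSet T2 p.1 ∩ colSet T2 p.2).card) 0
    (fun p hp => hCC2val p.1 p.2 (ne_of_lt (Finset.mem_filter.mp hp).2)) (lamCC T2) hμcc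
  have hcccond : ∀ i j : Fin c, i ≠ j →
      ((colSet T2 i ∩ colSet T2 j).card : ℤ) = ⌊lamCC T2⌋ ∨
      ((colSet T2 i ∩ colSet T2 j).card : ℤ) = ⌈lamCC T2⌉ := by
    intro i j hneij
    rcases lt_or_gt_of_ne hneij with h | h
    · exact hfc_cc (i, j) (by simp [h])
    · rw [show colSet T2 i ∩ colSet T2 j = colSet T2 j ∩ colSet T2 i from Finset.inter_comm _ _]
      exact hfc_cc (j, i) (by simp [h])
  exact ⟨T2, hbin2, hequi, hrccond, hrrcond, hcccond⟩

/-- If `2v ≥ 2rc − c·min(r, c−1)` and an `(r × c, v)`-near triple array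
exists, then for each `0 < i ≤ rc − v` an `(r × c, v + i)`-near triple array exists. -/
theorem nearTripleArray_increase_symbols {r c v : ℕ} (hr : 2 ≤ r) (hc : 2 ≤ c)
    (hv1 : max r c ≤ v) (hv2 : v ≤ r * c)
    (hcond : 2 * r * c - c * min r (c - 1) ≤ 2 * v)
    (hex : ∃ T : Fin r × Fin c → Fin v, IsNearTripleArray T) :
    ∀ i : ℕ, 0 < i → i ≤ r * c - v →
      ∃ T' : Fin r × Fin c → Fin (v + i), IsNearTripleArray T' := by
  rw [mul_assoc] at hcond
  have hY1 : c * min r (c - 1) ≤ r * c := by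
    calc c * min r (c - 1) ≤ c * r := Nat.mul_le_mul_left c (min_le_left _ _)
      _ = r * c := mul_comm c r
  have hY2 : c * min r (c - 1) ≤ c * (c - 1) := Nat.mul_le_mul_left c (min_le_right _ _)
  intro i _ hile
  have key : ∀ k : ℕ, k ≤ r * c - v → ∃ T' : Fin r × Fin c → Fin (v + k), IsNearTripleArray T' := by
    intro k
    induction k with
    | zero => intro _; exact hex
    | succ n ih =>
      intro hle
      obtain ⟨T, hT⟩ := ih (by omega)
      have h1 : r * c ≤ 2 * (v + n) := by omega
      have h2 : v + n < r * c := by omega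
      have h3 : 2 * (r * c - (v + n)) ≤ c * (c - 1) := by omega
      exact nta_step hr hc h1 h2 h3 T hT
  exact key i hile
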